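/- Let F be a field, m and E finite types, D a matrix over F with rows indexed by m and columns indexed by E; for S ⊆ E let r(S) be the rank of the submatrix of columns in S, and let T_D(X,Y) = Σ_{S ⊆ E} X^{r(E) − r(S)} · Y^{|S| − r(S)}. Suppose σ ∈ E is neither a loop nor a bridge of D, i.e., the column Dσ is nonzero and r(E ∖ {σ}) = r(E). Then T_D(X,Y) = T_{D/σ}(X,Y) + T_{D∖σ}(X,Y), where D∖σ is the deletion and D/σ the contraction of D by σ. -/

import Mathlib

open MvPolynomial

/-- The rank of the family of vectors `(v σ)_{σ ∈ S}`. -/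
noncomputable def famRank (F : Type*) [Field F] {N : Type*} [AddCommGroup N] [Module F N]
    {E : Type*} (v : E → N) (S : Finset E) : ℕ :=
  Module.finrank F (Submodule.span F (v '' (S : Set E)))

/-- The corank–nullity (Tutte–Krushkal–Renardy) polynomial of a family of vectors:
`T_v(X,Y) = Σ_{S ⊆ E} X^(r(E) − r(S)) · Y^(|S| − r(S))`. -/
noncomputable def famTutte (F : Type*) [Field F] {N : Type*} [AddCommGroup N] [Module F N]
    {E : Type*} [Fintype E] (v : E → N) : MvPolynomial (Fin 2) ℤ :=
  ∑ S : Finset E,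
    X 0 ^ (famRank F v Finset.univ - famRank F v S) * X 1 ^ (S.card - famRank F v S)

/-- Rank of a family restricted along the subtype embedding. -/
lemma famRank_subtype {F : Type*} [Field F] {N : Type*} [AddCommGroup N] [Module F N]
    {E : Type*} (v : E → N) (p : E → Prop) [DecidablePred p] (S : Finset {x : E // p x}) :
    famRank F (fun τ : {x : E // p x} => v ↑τ) S
      = famRank F v (S.map (Function.Embedding.subtype p)) := by
  have h : (fun τ : {x : E // p x} => v ↑τ) '' ↑S
      = v '' ↑(S.map (Function.Embedding.subtype p)) := by
    rw [Finset.coe_map, ← Set.image_comp]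
    rfl
  unfold famRank
  rw [h]

lemma finrank_map_mkQ {F : Type*} [Field F] {N : Type*} [AddCommGroup N] [Module F N]
    [FiniteDimensional F N] (W p : Submodule F N) (hWp : W ≤ p)
    (hW : Module.finrank F W = 1) :
    Module.finrank F (p.map W.mkQ) + 1 = Module.finrank F p := by
  have h := LinearMap.finrank_range_add_finrank_ker (W.mkQ.comp p.subtype)
  have hrange : LinearMap.range (W.mkQ.comp p.subtype) = p.map W.mkQ := by
    rw [LinearMap.range_comp, Submodule.range_subtype]
  have hker : LinearMap.ker (W.mkQ.comp p.subtype) = Submodule.comap p.subtype W := by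
    rw [LinearMap.ker_comp, Submodule.ker_mkQ]
  rw [hrange, hker] at h
  have hck : Module.finrank F (Submodule.comap p.subtype W) = 1 := by
    rw [(Submodule.comapSubtypeEquivOfLe hWp).finrank_eq, hW]
  rw [hck] at h
  exact h

/-- Rank of the contracted family. -/
lemma famRank_mkQ {F : Type*} [Field F] {N : Type*} [AddCommGroup N] [Module F N]
    [FiniteDimensional F N] {E : Type*} [DecidableEq E] (v : E → N) (σ : E) (hσ : v σ ≠ 0)
    (S : Finset {x : E // x ≠ σ}) :
    famRank F (fun τ : {x : E // x ≠ σ} => (Submodule.span F {v σ}).mkQ (v ↑τ)) S + 1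
      = famRank F v (insert σ (S.map (Function.Embedding.subtype _))) := by
  set W : Submodule F N := Submodule.span F {v σ} with hWdef
  set T : Finset E := insert σ (S.map (Function.Embedding.subtype _)) with hTdef
  have him : (fun τ : {x : E // x ≠ σ} => W.mkQ (v ↑τ)) '' ↑S
      = W.mkQ '' (v '' (Subtype.val '' (↑S : Set {x : E // x ≠ σ}))) := by
    rw [← Set.image_comp, ← Set.image_comp]
    rfl
  have hTset : (↑T : Set E) = insert σ (Subtype.val '' (↑S : Set {x : E // x ≠ σ})) := by
    rw [hTdef, Finset.coe_insert, Finset.coe_map]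
    rfl
  have hWbot : W.map W.mkQ = ⊥ := by
    refine le_antisymm ?_ bot_le
    rw [Submodule.map_le_iff_le_comap, Submodule.comap_bot, Submodule.ker_mkQ]
  have hspan : Submodule.span F ((fun τ : {x : E // x ≠ σ} => W.mkQ (v ↑τ)) '' ↑S)
      = (Submodule.span F (v '' (↑T : Set E))).map W.mkQ := by
    rw [him, Submodule.span_image, hTset, Set.image_insert_eq, Submodule.span_insert,
      Submodule.map_sup]
    rw [show Submodule.span F {v σ} = W from rfl, hWbot, bot_sup_eq]
  have hWle : W ≤ Submodule.span F (v '' (↑T : Set E)) := by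
    rw [hWdef]
    refine Submodule.span_le.2 ?_
    rintro x rfl
    exact Submodule.subset_span ⟨σ, by simp [hTset], rfl⟩
  have hW1 : Module.finrank F W = 1 := finrank_span_singleton hσ
  unfold famRank
  rw [hspan]
  exact finrank_map_mkQ W _ hWle hW1

/-- if `σ ∈ E` is neither a loop (its column `Dσ` is nonzero) nor a bridge
(`r(E ∖ {σ}) = r(E)`), then `T_D(X,Y) = T_{D/σ}(X,Y) + T_{D∖σ}(X,Y)`, where `D∖σ` is the
deletion (columns `E ∖ {σ}` of `D`) and `D/σ` the contraction (columns `E ∖ {σ}` composed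
with the quotient map `F^m → F^m / span(Dσ)`). -/
theorem statement8 {F : Type*} [Field F] {m E : Type*} [Fintype m] [Fintype E]
    [DecidableEq E] (D : Matrix m E F) (σ : E)
    (hnotloop : (fun i => D i σ) ≠ (0 : m → F))
    (hnotbridge : famRank F (fun τ i => D i τ) (Finset.univ.erase σ)
      = famRank F (fun τ i => D i τ) (Finset.univ : Finset E)) :
    famTutte F (fun τ i => D i τ)
      = famTutte F (fun τ : {x : E // x ≠ σ} =>
          (Submodule.span F {fun i => D i σ}).mkQ (fun i => D i (τ : E)))
        + famTutte F (fun (τ : {x : E // x ≠ σ}) (i : m) => D i (τ : E)) := by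
  classical
  set v : E → (m → F) := fun τ i => D i τ with hv
  have hσ : v σ ≠ 0 := hnotloop
  set emb : {x : E // x ≠ σ} ↪ E := Function.Embedding.subtype _ with hemb
  have e1 : (fun τ : {x : E // x ≠ σ} =>
        (Submodule.span F {fun i => D i σ}).mkQ (fun i => D i (τ : E)))
      = (fun τ : {x : E // x ≠ σ} => (Submodule.span F {v σ}).mkQ (v ↑τ)) := rfl
  have e2 : (fun (τ : {x : E // x ≠ σ}) (i : m) => D i (τ : E))
      = (fun τ : {x : E // x ≠ σ} => v ↑τ) := rfl
  rw [e1, e2]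
  -- the full column set of the subtype maps to `univ.erase σ`
  have huniv_map : (Finset.univ : Finset {x : E // x ≠ σ}).map emb = Finset.univ.erase σ := by
    ext x
    simp [hemb, eq_comm]
  have huniv_ins : insert σ ((Finset.univ : Finset {x : E // x ≠ σ}).map emb)
      = (Finset.univ : Finset E) := by
    rw [huniv_map, Finset.insert_erase (Finset.mem_univ σ)]
  -- key combinatorial facts about the bijections
  have hmapsub : ∀ S : Finset E, (S.subtype (· ≠ σ)).map emb = S.erase σ := by
    intro S
    rw [hemb, Finset.subtype_map, Finset.filter_ne']
  have key1 : ∀ S : Finset E, σ ∈ S → insert σ ((S.subtype (· ≠ σ)).map emb) = S := by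
    intro S hS
    rw [hmapsub, Finset.insert_erase hS]
  have hnotmem : ∀ S : Finset {x : E // x ≠ σ}, σ ∉ S.map emb := by
    intro S h
    obtain ⟨y, _, hy⟩ := Finset.mem_map.1 h
    exact y.2 hy
  have key2 : ∀ S : Finset {x : E // x ≠ σ}, (insert σ (S.map emb)).subtype (· ≠ σ) = S := by
    intro S
    apply Finset.map_injective emb
    rw [hmapsub, Finset.erase_insert (hnotmem S)]
  have key3 : ∀ S : Finset E, σ ∉ S → (S.subtype (· ≠ σ)).map emb = S := by
    intro S hS
    rw [hmapsub, Finset.erase_eq_of_notMem hS]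
  have key4 : ∀ S : Finset {x : E // x ≠ σ}, (S.map emb).subtype (· ≠ σ) = S := by
    intro S
    apply Finset.map_injective emb
    rw [hmapsub, Finset.erase_eq_of_notMem (hnotmem S)]
  -- ranks
  set rE : ℕ := famRank F v Finset.univ with hrE
  have hdel_univ : famRank F (fun τ : {x : E // x ≠ σ} => v ↑τ) Finset.univ = rE := by
    rw [famRank_subtype]
    rw [show Finset.map (Function.Embedding.subtype _) (Finset.univ : Finset {x : E // x ≠ σ})
        = Finset.univ.erase σ from huniv_map]
    exact hnotbridge
  have hcon_univ : famRank F
      (fun τ : {x : E // x ≠ σ} => (Submodule.span F {v σ}).mkQ (v ↑τ)) Finset.univ + 1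
      = rE := by
    rw [famRank_mkQ v σ hσ]
    rw [show insert σ (Finset.map (Function.Embedding.subtype _)
        (Finset.univ : Finset {x : E // x ≠ σ})) = Finset.univ from huniv_ins]
  -- split the big sum
  rw [famTutte, famTutte, famTutte,
    ← Finset.sum_filter_add_sum_filter_not Finset.univ (fun S : Finset E => σ ∈ S)]
  congr 1
  · -- contraction part: subsets containing σ
    rw [Finset.sum_bij' (i := fun (S : Finset E) (_ : S ∈ Finset.univ.filter (σ ∈ ·)) =>
        S.subtype (· ≠ σ))
      (j := fun (S : Finset {x : E // x ≠ σ}) _ => insert σ (S.map emb))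
      (hi := fun a _ => Finset.mem_univ _)
      (hj := fun a _ => by
        simp only [Finset.mem_filter, Finset.mem_univ, true_and]
        exact Finset.mem_insert_self σ _)
      (left_neg := fun a ha => by
        simp only [Finset.mem_filter, Finset.mem_univ, true_and] at ha
        exact key1 a ha)
      (right_neg := fun a _ => key2 a)]
    intro S hS
    simp only [Finset.mem_filter, Finset.mem_univ, true_and] at hS
    set S' : Finset {x : E // x ≠ σ} := S.subtype (· ≠ σ) with hS'
    have hrank : famRank F
        (fun τ : {x : E // x ≠ σ} => (Submodule.span F {v σ}).mkQ (v ↑τ)) S' + 1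
        = famRank F v S := by
      rw [famRank_mkQ v σ hσ]
      rw [show insert σ (Finset.map (Function.Embedding.subtype _) S') = S from key1 S hS]
    have hcard : S.card = S'.card + 1 := by
      conv_lhs => rw [← key1 S hS]
      rw [Finset.card_insert_of_notMem (hnotmem S'), Finset.card_map]
    set a : ℕ := famRank F
        (fun τ : {x : E // x ≠ σ} => (Submodule.span F {v σ}).mkQ (v ↑τ)) S' with haa
    set c : ℕ := famRank F
        (fun τ : {x : E // x ≠ σ} => (Submodule.span F {v σ}).mkQ (v ↑τ)) Finset.univ with hcc
    set b : ℕ := famRank F v S with hbb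
    set n : ℕ := S.card with hnn
    set n' : ℕ := S'.card with hnn'
    congr 1
    · congr 1
      omega
    · congr 1
      omega
  · -- deletion part: subsets not containing σ
    rw [Finset.sum_bij' (i := fun (S : Finset E) (_ : S ∈ Finset.univ.filter (¬ σ ∈ ·)) =>
        S.subtype (· ≠ σ))
      (j := fun (S : Finset {x : E // x ≠ σ}) _ => S.map emb)
      (hi := fun a _ => Finset.mem_univ _)
      (hj := fun a _ => by
        simp only [Finset.mem_filter, Finset.mem_univ, true_and]
        exact hnotmem a)
      (left_neg := fun a ha => by
        simp only [Finset.mem_filter, Finset.mem_univ, true_and] at ha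
        exact key3 a ha)
      (right_neg := fun a _ => key4 a)]
    intro S hS
    simp only [Finset.mem_filter, Finset.mem_univ, true_and] at hS
    set S' : Finset {x : E // x ≠ σ} := S.subtype (· ≠ σ) with hS'
    have hrank : famRank F (fun τ : {x : E // x ≠ σ} => v ↑τ) S' = famRank F v S := by
      rw [famRank_subtype]
      rw [show Finset.map (Function.Embedding.subtype _) S' = S from key3 S hS]
    have hcard : S'.card = S.card := by
      conv_rhs => rw [← key3 S hS]
      rw [Finset.card_map]
    rw [hdel_univ, hrank, hcard]
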